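/- In the disjoint setting, let σ_1* be any mixed strategy of Player 1 whose marginals satisfy ρ_{σ_1*}(v_j) = 1 − (p−b_1)/(w_{e*_j} S_p) for j ≤ p and ρ_{σ_1*}(v_j) = 0 for j > p. Then for every component e ∈ ℰ, the expected loss satisfies L(σ_1*, e) ≤ (p − b_1)/S_p. -/

import Mathlib

open Finset

/-- In the disjoint setting, if `σ₁*` is any mixed strategy of Player 1
whose marginals satisfy condition (4), then for every component `e`,
`L(σ₁*, e) ≤ (p − b₁)/S_p`.  Nodes are indexed 0-based by `Fin n`, so the paper's `p`
equals our `(p : ℕ) + 1`. -/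
theorem stmt3
    {n : ℕ} {E : Type*} [Fintype E] [DecidableEq E]
    (M : Fin n → Finset E) (w : E → ℝ)
    (hMne : ∀ i, (M i).Nonempty)
    (hcov : ∀ e : E, ∃ i, e ∈ M i)
    (hdisj : ∀ i j : Fin n, i ≠ j → Disjoint (M i) (M j))
    (hw : ∀ e, 0 < w e ∧ w e ≤ 1)
    (estar : Fin n → E)
    (hestar : ∀ i, estar i ∈ M i ∧ ∀ e ∈ M i, w e ≤ w (estar i))
    (horder : ∀ i j : Fin n, i ≤ j → w (estar j) ≤ w (estar i))
    (b1 : ℕ) (hb1 : b1 ≤ n)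
    (p : Fin n)
    (hpZ : (((p : ℕ) : ℝ) + 1 - b1) / (∑ i ∈ Finset.Iic p, 1 / w (estar i)) ≤ w (estar p))
    (hpmax : ∀ j : Fin n,
      (((j : ℕ) : ℝ) + 1 - b1) / (∑ i ∈ Finset.Iic j, 1 / w (estar i)) ≤ w (estar j) → j ≤ p)
    (Sp : ℝ) (hSp : Sp = ∑ i ∈ Finset.Iic p, 1 / w (estar i))
    (σ1 : Finset (Fin n) → ℝ)
    (hσ1nn : ∀ S, 0 ≤ σ1 S) (hσ1sum : ∑ S : Finset (Fin n), σ1 S = 1)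
    (hσ1card : ∀ S : Finset (Fin n), σ1 S ≠ 0 → S.card ≤ b1)
    (hmarg : ∀ j : Fin n,
      (∑ S : Finset (Fin n), if j ∈ S then σ1 S else 0) =
        if j ≤ p then 1 - (((p : ℕ) : ℝ) + 1 - b1) / (w (estar j) * Sp) else 0) :
    ∀ e : E,
      (∑ S : Finset (Fin n), σ1 S * (if e ∈ S.biUnion M then 0 else w e)) ≤
        (((p : ℕ) : ℝ) + 1 - b1) / Sp := by

  intro e
  have hwpos : ∀ x, 0 < w x := fun x => (hw x).1
  have hSppos : 0 < Sp := by
    rw [hSp]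
    apply Finset.sum_pos
    · intro i _; exact div_pos one_pos (hwpos _)
    · exact ⟨p, Finset.mem_Iic.mpr le_rfl⟩
  have hrho_le : ∀ j : Fin n, (∑ S : Finset (Fin n), if j ∈ S then σ1 S else 0) ≤ 1 := by
    intro j
    rw [← hσ1sum]
    apply Finset.sum_le_sum
    intro S _
    split
    · exact le_rfl
    · exact hσ1nn S
  have hnum : 0 ≤ (((p : ℕ) : ℝ) + 1 - b1) := by
    have h := hmarg p
    rw [if_pos le_rfl] at h
    have h1 := hrho_le p
    rw [h] at h1
    have h2 : 0 ≤ (((p : ℕ) : ℝ) + 1 - b1) / (w (estar p) * Sp) := by linarith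
    have hd : 0 < w (estar p) * Sp := mul_pos (hwpos _) hSppos
    have h3 := (le_div_iff₀ hd).mp h2
    linarith
  obtain ⟨i, hei⟩ := hcov e
  have hmem : ∀ S : Finset (Fin n), e ∈ S.biUnion M ↔ i ∈ S := by
    intro S
    simp only [Finset.mem_biUnion]
    constructor
    · rintro ⟨j, hjS, hej⟩
      rcases eq_or_ne j i with rfl | hne
      · exact hjS
      · exact absurd hei (Finset.disjoint_left.mp (hdisj j i hne) hej)
    · intro h; exact ⟨i, h, hei⟩
  have hwe : w e ≤ w (estar i) := (hestar i).2 e hei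
  have hsum : (∑ S : Finset (Fin n), σ1 S * (if e ∈ S.biUnion M then 0 else w e))
      = w e * (1 - (∑ S : Finset (Fin n), if i ∈ S then σ1 S else 0)) := by
    have hr : w e * (1 - (∑ S : Finset (Fin n), if i ∈ S then σ1 S else 0))
        = ∑ S : Finset (Fin n), (w e * σ1 S - w e * (if i ∈ S then σ1 S else 0)) := by
      rw [Finset.sum_sub_distrib, ← Finset.mul_sum, ← Finset.mul_sum, hσ1sum]
      ring
    rw [hr]
    apply Finset.sum_congr rfl
    intro S _
    by_cases h : i ∈ S
    · have : e ∈ S.biUnion M := (hmem S).mpr h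
      simp [h, this]
    · have : e ∉ S.biUnion M := fun hc => h ((hmem S).mp hc)
      simp [h, this]; ring
  rw [hsum, hmarg i]
  by_cases hip : i ≤ p
  · rw [if_pos hip]
    have hd : 0 < w (estar i) * Sp := mul_pos (hwpos _) hSppos
    have key : w (estar i) * ((((p : ℕ) : ℝ) + 1 - b1) / (w (estar i) * Sp))
        = (((p : ℕ) : ℝ) + 1 - b1) / Sp := by
      field_simp
      linear_combination (((p : ℕ) : ℝ) - b1 + 1) * mul_inv_cancel₀ (hwpos (estar i)).ne'
    have h1 : w e * (1 - (1 - (((p : ℕ) : ℝ) + 1 - b1) / (w (estar i) * Sp)))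
        = w e * ((((p : ℕ) : ℝ) + 1 - b1) / (w (estar i) * Sp)) := by ring
    rw [h1, ← key]
    exact mul_le_mul_of_nonneg_right hwe (div_nonneg hnum hd.le)
  · rw [if_neg hip]
    have hpi : (p : ℕ) < (i : ℕ) := Fin.lt_iff_val_lt_val.mp (lt_of_not_ge hip)
    have hqn : (p : ℕ) + 1 < n := lt_of_le_of_lt hpi i.isLt
    set q : Fin n := ⟨(p : ℕ) + 1, hqn⟩ with hqdef
    have hqp : ¬ q ≤ p := by
      simp [Fin.le_def, hqdef]
    have hq2 : w (estar q) <
        (((q : ℕ) : ℝ) + 1 - b1) / (∑ k ∈ Finset.Iic q, 1 / w (estar k)) := by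
      by_contra hcon
      exact hqp (hpmax q (not_lt.mp hcon))
    have hqnotin : q ∉ Finset.Iic p := by
      simp [Finset.mem_Iic, Fin.le_def, hqdef]
    have hIic : Finset.Iic q = insert q (Finset.Iic p) := by
      ext j
      simp only [Finset.mem_Iic, Finset.mem_insert, Fin.le_def, Fin.ext_iff, hqdef]
      omega
    have hSq : (∑ k ∈ Finset.Iic q, 1 / w (estar k)) = 1 / w (estar q) + Sp := by
      rw [hIic, Finset.sum_insert hqnotin, hSp]
    have hSqpos : 0 < 1 / w (estar q) + Sp := by
      have := hwpos (estar q); positivity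
    rw [hSq] at hq2
    have h3 : w (estar q) * (1 / w (estar q) + Sp) < ((q : ℕ) : ℝ) + 1 - b1 :=
      (lt_div_iff₀ hSqpos).mp hq2
    have hq4 : w (estar q) * (1 / w (estar q) + Sp) = 1 + w (estar q) * Sp := by
      rw [mul_add, mul_one_div, div_self (ne_of_gt (hwpos _))]
    have hqval : ((q : ℕ) : ℝ) = ((p : ℕ) : ℝ) + 1 := by
      have : (q : ℕ) = (p : ℕ) + 1 := rfl
      rw [this]; push_cast; ring
    rw [hq4, hqval] at h3
    have h5 : w (estar q) * Sp < ((p : ℕ) : ℝ) + 1 - b1 := by linarith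
    have h6 : w (estar q) < (((p : ℕ) : ℝ) + 1 - b1) / Sp := (lt_div_iff₀ hSppos).mpr h5
    have hqi : q ≤ i := by
      simp only [Fin.le_def, hqdef]
      omega
    have h7 : w (estar i) ≤ w (estar q) := horder q i hqi
    linarith
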